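/- Let A ∈ GL₂(ℤ₉) satisfy A·Aᵗ = λI for a unit λ ∈ ℤ₉, let Φ : Rⁿ → ℤ₉^{2n} be the associated Gray map, and let C be a linear code of length n over R. Then Φ(C^⊥) = Φ(C)^⊥, where duals are taken with respect to the Euclidean inner product. In particular, if C is self-dual then Φ(C) is self-dual over ℤ₉. -/

import Mathlib

open Polynomial

noncomputable section

/-- The ring `R = ℤ₉[u]/(u² - u)`. -/
abbrev R9 : Type := Polynomial (ZMod 9) ⧸ Ideal.span {(X : Polynomial (ZMod 9)) ^ 2 - X}

/-- The element `u` of `R`, the image of `X`. -/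
def uu : R9 := Ideal.Quotient.mk _ (X : Polynomial (ZMod 9))

/-- The canonical embedding `ℤ₉ → R`. -/
def ι : ZMod 9 →+* R9 :=
  (Ideal.Quotient.mk _).comp (Polynomial.C : ZMod 9 →+* Polynomial (ZMod 9))
/-- The decomposition map `R → ℤ₉ × ℤ₉`, sending `u·a + (1-u)·b` to `(a, b)`
(i.e. evaluation of a polynomial representative at `1` and at `0`). -/
def dec : R9 →+* ZMod 9 × ZMod 9 :=
  Ideal.Quotient.lift _ ((Polynomial.evalRingHom 1).prod (Polynomial.evalRingHom 0))
    (by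
      intro a ha
      have h : Ideal.span {(X : Polynomial (ZMod 9)) ^ 2 - X} ≤
          RingHom.ker ((Polynomial.evalRingHom (1 : ZMod 9)).prod (Polynomial.evalRingHom 0)) := by
        rw [Ideal.span_le, Set.singleton_subset_iff]
        simp [RingHom.mem_ker, Prod.ext_iff]
      exact h ha)

lemma dec_uu : dec uu = (1, 0) := by
  rw [show dec uu = ((Polynomial.evalRingHom 1).prod (Polynomial.evalRingHom 0)) X from rfl]; simp

lemma dec_iota (a : ZMod 9) : dec (ι a) = (a, a) := by
  rw [show dec (ι a) = ((Polynomial.evalRingHom 1).prod (Polynomial.evalRingHom 0)) (C a) from rfl]; simp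

lemma dec_inj {r : R9} (h : dec r = 0) : r = 0 := by
  obtain ⟨f, rfl⟩ := Ideal.Quotient.mk_surjective r
  have h1 : f.eval 1 = 0 := by
    have := congrArg Prod.fst h; rw [show dec (Ideal.Quotient.mk _ f) = ((Polynomial.evalRingHom 1).prod (Polynomial.evalRingHom 0)) f from rfl] at this; simpa using this
  have h0 : f.eval 0 = 0 := by
    have := congrArg Prod.snd h; rw [show dec (Ideal.Quotient.mk _ f) = ((Polynomial.evalRingHom 1).prod (Polynomial.evalRingHom 0)) f from rfl] at this; simpa using this
  have d0 : (X - C (0 : ZMod 9)) ∣ f := dvd_iff_isRoot.mpr h0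
  have d1 : (X - C (1 : ZMod 9)) ∣ f := dvd_iff_isRoot.mpr h1
  have hc : IsCoprime (X - C (0 : ZMod 9)) (X - C (1 : ZMod 9)) :=
    isCoprime_X_sub_C_of_isUnit_sub (by simp)
  have : (X - C (0:ZMod 9)) * (X - C 1) ∣ f := hc.mul_dvd d0 d1
  have hmem : f ∈ Ideal.span {(X : Polynomial (ZMod 9)) ^ 2 - X} := by
    rw [Ideal.mem_span_singleton]
    have : (X : Polynomial (ZMod 9)) ^ 2 - X = (X - C 0) * (X - C 1) := by simp; ring
    rw [this]; exact hc.mul_dvd d0 d1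
  exact Ideal.Quotient.eq_zero_iff_mem.mpr hmem

def decInv (p : ZMod 9 × ZMod 9) : R9 := ι p.1 * uu + ι p.2 * (1 - uu)

lemma dec_decInv (p : ZMod 9 × ZMod 9) : dec (decInv p) = p := by
  simp [decInv, dec_uu, dec_iota, Prod.ext_iff]

/-- The Gray image of a single coordinate: the row vector `(a, b)·A`. -/
def grayCoord (A : Matrix (Fin 2) (Fin 2) (ZMod 9)) (r : R9) : Fin 2 → ZMod 9 :=
  Matrix.vecMul ![(dec r).1, (dec r).2] A

/-- The Gray map `Φ : Rⁿ → ℤ₉^{2n}`. -/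
def gray (n : ℕ) (A : Matrix (Fin 2) (Fin 2) (ZMod 9)) (c : Fin n → R9) :
    Fin n × Fin 2 → ZMod 9 :=
  fun p => grayCoord A (c p.1) p.2
section Inner
variable {A : Matrix (Fin 2) (Fin 2) (ZMod 9)} {lam : ZMod 9}

lemma coordInner (hA : A * A.transpose = lam • (1 : Matrix (Fin 2) (Fin 2) (ZMod 9))) (r s : R9) :
    ∑ j, grayCoord A r j * grayCoord A s j =
      lam * ((dec (r * s)).1 + (dec (r * s)).2) := by
  have h00 := congrFun (congrFun hA 0) 0
  have h01 := congrFun (congrFun hA 0) 1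
  have h11 := congrFun (congrFun hA 1) 1
  simp [Matrix.mul_apply, Matrix.one_apply, Fin.sum_univ_two] at h00 h01 h11
  simp only [map_mul, Prod.fst_mul, Prod.snd_mul]
  simp [grayCoord, Matrix.vecMul, dotProduct, Fin.sum_univ_two]
  linear_combination ((dec r).1 * (dec s).1) * h00 + ((dec r).2 * (dec s).2) * h11 +
    ((dec r).1 * (dec s).2 + (dec r).2 * (dec s).1) * h01

lemma grayInner (hA : A * A.transpose = lam • (1 : Matrix (Fin 2) (Fin 2) (ZMod 9))) (n : ℕ) (x c : Fin n → R9) :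
    ∑ p, gray n A x p * gray n A c p =
      lam * ((dec (∑ i, x i * c i)).1 + (dec (∑ i, x i * c i)).2) := by
  rw [Fintype.sum_prod_type, map_sum]
  simp only [Prod.fst_sum, Prod.snd_sum, gray, ← Finset.sum_add_distrib, Finset.mul_sum]
  exact Finset.sum_congr rfl fun i _ => coordInner hA (x i) (c i)

end Inner

def dualR (n : ℕ) (S : Set (Fin n → R9)) : Set (Fin n → R9) :=
  {x | ∀ c ∈ S, ∑ i, x i * c i = 0}

/-- The Euclidean dual of a set of words over `ℤ₉`. -/
def dualZ {m : Type*} [Fintype m] (S : Set (m → ZMod 9)) : Set (m → ZMod 9) :=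
  {x | ∀ c ∈ S, ∑ i, x i * c i = 0}

lemma gray_surj {A : Matrix (Fin 2) (Fin 2) (ZMod 9)} {lam : ZMod 9}
    (hlam : IsUnit lam) (hA : A * A.transpose = lam • (1 : Matrix (Fin 2) (Fin 2) (ZMod 9)))
    (n : ℕ) (z : Fin n × Fin 2 → ZMod 9) : ∃ x : Fin n → R9, gray n A x = z := by
  set B : Matrix (Fin 2) (Fin 2) (ZMod 9) := (↑hlam.unit⁻¹ : ZMod 9) • A.transpose with hB
  have hAB : A * B = 1 := by
    rw [hB, Matrix.mul_smul, hA, smul_smul]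
    rw [IsUnit.val_inv_mul hlam, one_smul]
  have hBA : B * A = 1 := mul_eq_one_comm.mp hAB
  refine ⟨fun i => decInv (Matrix.vecMul (fun j => z (i, j)) B 0,
      Matrix.vecMul (fun j => z (i, j)) B 1), ?_⟩
  funext p
  obtain ⟨i, j⟩ := p
  have hw : ![Matrix.vecMul (fun j => z (i, j)) B 0, Matrix.vecMul (fun j => z (i, j)) B 1]
      = Matrix.vecMul (fun j => z (i, j)) B := by
    funext k; fin_cases k <;> rfl
  simp only [gray, grayCoord, dec_decInv, hw, Matrix.vecMul_vecMul, hBA, Matrix.vecMul_one]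

theorem stmt8 (n : ℕ) (A : Matrix (Fin 2) (Fin 2) (ZMod 9)) (lam : ZMod 9)
    (hlam : IsUnit lam) (hA : A * A.transpose = lam • (1 : Matrix (Fin 2) (Fin 2) (ZMod 9)))
    (C : Submodule R9 (Fin n → R9)) :
    gray n A '' dualR n (C : Set (Fin n → R9)) = dualZ (gray n A '' (C : Set (Fin n → R9))) ∧
    ((C : Set (Fin n → R9)) = dualR n (C : Set (Fin n → R9)) →
      gray n A '' (C : Set (Fin n → R9)) = dualZ (gray n A '' (C : Set (Fin n → R9)))) := by
  have key : gray n A '' dualR n (C : Set (Fin n → R9))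
      = dualZ (gray n A '' (C : Set (Fin n → R9))) := by
    ext z
    constructor
    · rintro ⟨x, hx, rfl⟩ y ⟨c, hc, rfl⟩
      rw [grayInner hA]
      rw [hx c hc]
      simp
    · intro hz
      obtain ⟨x, rfl⟩ := gray_surj hlam hA n z
      refine ⟨x, ?_, rfl⟩
      intro c hc
      set s := ∑ i, x i * c i with hs
      -- use u • c and (1-u) • c
      have huc : uu • c ∈ C := C.smul_mem uu hc
      have hvc : (1 - uu) • c ∈ C := C.smul_mem _ hc
      have h1 : lam * ((dec (uu * s)).1 + (dec (uu * s)).2) = 0 := by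
        have := hz (gray n A (uu • c)) ⟨_, huc, rfl⟩
        rw [grayInner hA] at this
        have hsum : ∑ i, x i * (uu • c) i = uu * s := by
          rw [hs, Finset.mul_sum]
          exact Finset.sum_congr rfl fun i _ => by
            simp only [Pi.smul_apply, smul_eq_mul]; ring
        rwa [hsum] at this
      have h2 : lam * ((dec ((1 - uu) * s)).1 + (dec ((1 - uu) * s)).2) = 0 := by
        have := hz (gray n A ((1 - uu) • c)) ⟨_, hvc, rfl⟩
        rw [grayInner hA] at this
        have hsum : ∑ i, x i * ((1 - uu) • c) i = (1 - uu) * s := by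
          rw [hs, Finset.mul_sum]
          exact Finset.sum_congr rfl fun i _ => by
            simp only [Pi.smul_apply, smul_eq_mul]; ring
        rwa [hsum] at this
      have hdu : dec uu = (1, 0) := dec_uu
      have hd1 : dec (1 - uu) = (0, 1) := by
        rw [map_sub, map_one, hdu]; ext <;> simp
      rw [map_mul, hdu] at h1
      rw [map_mul, hd1] at h2
      simp only [Prod.fst_mul, Prod.snd_mul] at h1 h2
      have hs1 : (dec s).1 = 0 := by
        have := (hlam.mul_right_eq_zero).mp (by simpa using h1)
        simpa using this
      have hs2 : (dec s).2 = 0 := by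
        have := (hlam.mul_right_eq_zero).mp (by simpa using h2)
        simpa using this
      have : s = 0 := dec_inj (Prod.ext hs1 hs2)
      exact this
  refine ⟨key, fun hself => ?_⟩
  rw [← hself] at key
  exact key
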